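/- arXiv:2310.14145 — 2 statements merged into one kernel-verified Lean document; each statement's English description precedes it below -/
import Mathlib

section
/- The group G satisfies the open set condition: for every g ∈ G there exists a word v ∈ {0,1}* such that the section g|_v is the identity automorphism. -/
namespace BVTree

/-- States of the automaton (generators, their inverses, and the identity). -/
inductive Q : Type
  | e | qa | qb | qc | qd | qa' | qb' | qc' | qd'
  deriving DecidableEq

open Q

/-- Output function of the automaton. -/
def Qout : Q → Bool → Bool
  | qa, x => !x
  | qa', x => !x
  | _, x => x

/-- Transition function of the automaton. -/
def Qtrans : Q → Bool → Q
  | qa, false => qd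
  | qa, true => e
  | qb, false => qa
  | qb, true => qc
  | qc, _ => qa
  | qd, false => e
  | qd, true => qb
  | qa', false => e
  | qa', true => qd'
  | qb', false => qa'
  | qb', true => qc'
  | qc', _ => qa'
  | qd', false => e
  | qd', true => qb'
  | e, _ => e

/-- The state corresponding to the inverse automorphism. -/
def Qinv : Q → Q
  | e => e
  | qa => qa' | qb => qb' | qc => qc' | qd => qd'
  | qa' => qa | qb' => qb | qc' => qc | qd' => qd

/-- The action of a state on finite binary words. -/
def act : Q → List Bool → List Bool
  | _, [] => []
  | q, x :: w => Qout q x :: act (Qtrans q x) w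

lemma act_inv (q : Q) : ∀ w, act (Qinv q) (act q w) = w := by
  intro w
  induction w generalizing q with
  | nil => rfl
  | cons x w ih =>
    have h1 : Qout (Qinv q) (Qout q x) = x := by cases q <;> cases x <;> rfl
    have h2 : Qtrans (Qinv q) (Qout q x) = Qinv (Qtrans q x) := by
      cases q <;> cases x <;> rfl
    simp [act, h1, h2, ih]

/-- The tree automorphism determined by a state of the automaton. -/
def aut (q : Q) : Equiv.Perm (List Bool) where
  toFun := act q
  invFun := act (Qinv q)
  left_inv := act_inv q
  right_inv := by
    intro w
    have h : Qinv (Qinv q) = q := by cases q <;> rfl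
    simpa [h] using act_inv (Qinv q) w

/-- The automorphism `a`: `a(0w) = 1·d(w)`, `a(1w) = 0·w`. -/
def a : Equiv.Perm (List Bool) := aut qa
/-- The automorphism `b`: `b(0w) = 0·a(w)`, `b(1w) = 1·c(w)`. -/
def b : Equiv.Perm (List Bool) := aut qb
/-- The automorphism `c`: `c(0w) = 0·a(w)`, `c(1w) = 1·a(w)`. -/
def c : Equiv.Perm (List Bool) := aut qc
/-- The automorphism `d`: `d(0w) = 0·w`, `d(1w) = 1·b(w)`. -/
def d : Equiv.Perm (List Bool) := aut qd

/-- The group `G` generated by `a`, `b`, `c`, `d`. -/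
def G : Subgroup (Equiv.Perm (List Bool)) := Subgroup.closure {a, b, c, d}


/-! ### Auxiliary machinery for the open set condition -/

/-- Action of a list of states (head applied last). -/
def actL : List Q → List Bool → List Bool
  | [], w => w
  | q :: L, w => act q (actL L w)

/-- Iterated transition along a word. -/
def transW : Q → List Bool → Q
  | q, [] => q
  | q, x :: v => transW (Qtrans q x) v

/-- Sections of a list of states at a vertex `v`. -/
def secL : List Q → List Bool → List Q
  | [], _ => []
  | q :: L, v => transW q (actL L v) :: secL L v

lemma Qtrans_e (x : Bool) : Qtrans e x = e := by cases x <;> rfl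

lemma act_e (w : List Bool) : act e w = w := by
  induction w with
  | nil => rfl
  | cons x w ih =>
    have h : Qout e x = x := by cases x <;> rfl
    simp [act, h, Qtrans_e, ih]

lemma transW_e (v : List Bool) : transW e v = e := by
  induction v with
  | nil => rfl
  | cons x v ih => simp [transW, Qtrans_e, ih]

lemma act_nil (q : Q) : act q [] = [] := rfl

lemma actL_nil (L : List Q) : actL L [] = [] := by
  induction L with
  | nil => rfl
  | cons q L ih => simp [actL, ih, act_nil]

lemma act_append (q : Q) (v w : List Bool) :
    act q (v ++ w) = act q v ++ act (transW q v) w := by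
  induction v generalizing q with
  | nil => simp [act, transW]
  | cons x v ih => simp [act, transW, ih]

lemma actL_append_list (A B : List Q) (w : List Bool) :
    actL (A ++ B) w = actL A (actL B w) := by
  induction A with
  | nil => rfl
  | cons q A ih => simp [actL, ih]

lemma transW_append (q : Q) (u v : List Bool) :
    transW q (u ++ v) = transW (transW q u) v := by
  induction u generalizing q with
  | nil => rfl
  | cons x u ih => simp [transW, ih]

lemma actL_split (L : List Q) (v w : List Bool) :
    actL L (v ++ w) = actL L v ++ actL (secL L v) w := by
  induction L with
  | nil => rfl
  | cons q L ih =>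
    simp only [actL, secL, ih, act_append]

lemma secL_append (A B : List Q) (v : List Bool) :
    secL (A ++ B) v = secL A (actL B v) ++ secL B v := by
  induction A with
  | nil => rfl
  | cons q A ih => simp [secL, ih, actL_append_list]

lemma secL_comp (L : List Q) (v₁ v₂ : List Bool) :
    secL L (v₁ ++ v₂) = secL (secL L v₁) v₂ := by
  induction L with
  | nil => rfl
  | cons q L ih =>
    simp only [secL, ih, actL_split, transW_append]

lemma actL_all_e (M : List Q) (hM : ∀ q ∈ M, q = e) (w : List Bool) :
    actL M w = w := by
  induction M with
  | nil => rfl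
  | cons q M ih =>
    have hq : q = e := hM q (by simp)
    have := ih (fun q hq => hM q (by simp [hq]))
    simp [actL, hq, act_e, this]

lemma secL_nil (L : List Q) : secL L [] = L := by
  induction L with
  | nil => rfl
  | cons x L ih => simp [secL, actL_nil, transW, ih]

/-- The counting predicate: non-identity states. -/
def pne (q : Q) : Bool := decide (q ≠ e)

lemma secL_countP (L : List Q) (v : List Bool) :
    (secL L v).countP pne ≤ L.countP pne := by
  induction L with
  | nil => simp [secL]
  | cons q L ih =>
    simp only [secL, List.countP_cons]
    by_cases hq : q = e
    · subst hq
      simp [transW_e, pne]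
      omega
    · have h1 : pne q = true := by simp [pne, hq]
      have : (if pne (transW q (actL L v)) = true then 1 else 0) ≤ 1 := by
        split <;> omega
      simp only [h1, if_true]
      omega

/-- A path that drives a given state to `e`. -/
def killPath : Q → List Bool
  | e => []
  | qa => [true]
  | qb => [false, true]
  | qc => [false, true]
  | qd => [false]
  | qa' => [false]
  | qb' => [false, false]
  | qc' => [false, false]
  | qd' => [false]

lemma transW_killPath (q : Q) : transW q (killPath q) = e := by
  cases q <;> rfl

lemma exists_decomp (L : List Q) (h : L.countP pne ≠ 0) :
    ∃ A q E, L = A ++ q :: E ∧ q ≠ e ∧ ∀ x ∈ E, x = e := by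
  induction L with
  | nil => simp [List.countP_nil] at h
  | cons x L ih =>
    by_cases hL : L.countP pne = 0
    · have hE : ∀ y ∈ L, y = e := by
        intro y hy
        have := (List.countP_eq_zero.mp hL) y hy
        simpa [pne] using this
      have hx : x ≠ e := by
        intro hx
        subst hx
        simp [List.countP_cons, pne, hL] at h
      exact ⟨[], x, L, by simp, hx, hE⟩
    · obtain ⟨A, q, E, h1, h2, h3⟩ := ih hL
      exact ⟨x :: A, q, E, by simp [h1], h2, h3⟩

lemma kill_all : ∀ n (L : List Q), L.countP pne ≤ n →
    ∃ v, ∀ q ∈ secL L v, q = e := by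
  intro n
  induction n with
  | zero =>
    intro L hL
    refine ⟨[], ?_⟩
    intro q hq
    have hall : ∀ q ∈ L, q = e := by
      intro q hq
      have := (List.countP_eq_zero.mp (Nat.le_zero.mp hL)) q hq
      simpa [pne] using this
    rw [secL_nil] at hq
    exact hall q hq
  | succ n ih =>
    intro L hL
    by_cases h0 : L.countP pne = 0
    · exact ih L (by omega)
    · obtain ⟨A, q, E, hLdec, hq, hE⟩ := exists_decomp L h0
      set v₁ := killPath q with hv₁
      have hEact : actL E v₁ = v₁ := actL_all_e E hE v₁
      have hsecE : ∀ x ∈ secL E v₁, x = e := by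
        intro x hx
        have h1 : (secL E v₁).countP pne ≤ E.countP pne := secL_countP E v₁
        have h2 : E.countP pne = 0 := List.countP_eq_zero.mpr (by
          intro y hy; simp [pne, hE y hy])
        have h3 : (secL E v₁).countP pne = 0 := by omega
        have := (List.countP_eq_zero.mp h3) x hx
        simpa [pne] using this
      have hsec1 : secL L v₁ = secL A (actL (q :: E) v₁) ++
          (transW q v₁ :: secL E v₁) := by
        rw [hLdec, secL_append]
        simp [secL, hEact]
      have hcount : (secL L v₁).countP pne ≤ n := by
        have hA : (secL A (actL (q :: E) v₁)).countP pne ≤ A.countP pne :=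
          secL_countP A _
        have htail : (transW q v₁ :: secL E v₁).countP pne = 0 := by
          apply List.countP_eq_zero.mpr
          intro y hy
          rcases List.mem_cons.mp hy with h | h
          · simp [h, pne, hv₁, transW_killPath]
          · simp [pne, hsecE y h]
        have hLc : L.countP pne = A.countP pne + (q :: E).countP pne := by
          rw [hLdec, List.countP_append]
        have hqE : (q :: E).countP pne = 1 := by
          have h2 : E.countP pne = 0 := List.countP_eq_zero.mpr (by
            intro y hy; simp [pne, hE y hy])
          simp [List.countP_cons, pne, hq, h2]
        rw [hsec1, List.countP_append, htail]
        omega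
      obtain ⟨v₂, hv₂⟩ := ih (secL L v₁) hcount
      refine ⟨v₁ ++ v₂, ?_⟩
      intro x hx
      rw [secL_comp] at hx
      exact hv₂ x hx

lemma actL_inv_cancel (L : List Q) (w : List Bool) :
    actL (L.reverse.map Qinv) (actL L w) = w := by
  induction L generalizing w with
  | nil => rfl
  | cons q L ih =>
    simp only [List.reverse_cons, List.map_append, List.map_cons, List.map_nil,
      actL_append_list, actL]
    rw [act_inv, ih]

lemma mem_G_rep (g : Equiv.Perm (List Bool)) (hg : g ∈ G) :
    ∃ L : List Q, ∀ w, g w = actL L w := by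
  refine Subgroup.closure_induction ?_ ?_ ?_ ?_ hg
  · intro x hx
    rcases hx with h | h | h | h
    · exact ⟨[qa], fun w => by simp [h, a, aut, actL]⟩
    · exact ⟨[qb], fun w => by simp [h, b, aut, actL]⟩
    · exact ⟨[qc], fun w => by simp [h, c, aut, actL]⟩
    · rw [Set.mem_singleton_iff] at h
      exact ⟨[qd], fun w => by simp [h, d, aut, actL]⟩
  · exact ⟨[], fun w => rfl⟩
  · rintro x y _ _ ⟨L₁, h₁⟩ ⟨L₂, h₂⟩
    exact ⟨L₁ ++ L₂, fun w => by
      simp [Equiv.Perm.mul_apply, h₁, h₂, actL_append_list]⟩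
  · rintro x _ ⟨L, hL⟩
    refine ⟨L.reverse.map Qinv, fun w => ?_⟩
    have key : ∀ u, actL (L.reverse.map Qinv) (x u) = u := by
      intro u
      rw [hL]
      exact actL_inv_cancel L u
    calc x⁻¹ w = actL (L.reverse.map Qinv) (x (x⁻¹ w)) := (key _).symm
      _ = actL (L.reverse.map Qinv) w := by rw [← Equiv.Perm.mul_apply, mul_inv_cancel, Equiv.Perm.one_apply]

/-- `G` satisfies the open set condition: every `g ∈ G` has a trivial section
at some vertex. -/
theorem open_set_condition (g : Equiv.Perm (List Bool)) (hg : g ∈ G) :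
    ∃ v : List Bool, ∀ w : List Bool, g (v ++ w) = g v ++ w := by
  obtain ⟨L, hL⟩ := mem_G_rep g hg
  obtain ⟨v, hv⟩ := kill_all (L.countP pne) L le_rfl
  refine ⟨v, fun w => ?_⟩
  rw [hL, hL, actL_split, actL_all_e (secL L v) hv]


end BVTree
end

section
/- For every n ≥ 1, the elements b^{2^n} and c^{2^n} belong to Stab_G(3n+1) but not to Stab_G(3n+2); that is, each of b^{2^n} and c^{2^n} fixes every word of length 3n+1 but moves some word of length 3n+2. -/
namespace BVTree

open Q

lemma b0 : ∀ w, b (false :: w) = false :: a w := fun _ => rfl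
lemma b1 : ∀ w, b (true :: w) = true :: c w := fun _ => rfl
lemma c0 : ∀ w, c (false :: w) = false :: a w := fun _ => rfl
lemma c1 : ∀ w, c (true :: w) = true :: a w := fun _ => rfl
lemma d1 : ∀ w, d (true :: w) = true :: b w := fun _ => rfl
lemma d0 : ∀ w, d (false :: w) = false :: aut Q.e w := fun _ => rfl
lemma af : ∀ w, a (false :: w) = true :: d w := fun _ => rfl
lemma at' : ∀ w, a (true :: w) = false :: aut Q.e w := fun _ => rfl
lemma acte : ∀ v, aut Q.e v = v := by
  intro v
  show act Q.e v = v
  induction v with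
  | nil => rfl
  | cons x w ih => simpa [act, Qout, Qtrans] using ih
lemma a2c : ∀ (x : Bool) w, (a ^ 2) (x :: w) = x :: d w := by
  intro x w
  rw [sq, Equiv.Perm.mul_apply]
  cases x
  · rw [af, at', acte]
  · rw [at', acte, af]


lemma pow_nil {g : Equiv.Perm (List Bool)} (h : g [] = []) (k : ℕ) :
    (g ^ k) [] = [] := by
  induction k with
  | zero => rfl
  | succ k ih => rw [pow_succ, Equiv.Perm.mul_apply, h, ih]

lemma pow_cons {g g0 g1 : Equiv.Perm (List Bool)}
    (h0 : ∀ w, g (false :: w) = false :: g0 w)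
    (h1 : ∀ w, g (true :: w) = true :: g1 w) (k : ℕ) :
    (∀ w, (g ^ k) (false :: w) = false :: (g0 ^ k) w) ∧
    (∀ w, (g ^ k) (true :: w) = true :: (g1 ^ k) w) := by
  induction k with
  | zero => simp
  | succ k ih =>
    refine ⟨fun w => ?_, fun w => ?_⟩
    · rw [pow_succ, Equiv.Perm.mul_apply, h0, ih.1, ← Equiv.Perm.mul_apply,
        ← pow_succ]
    · rw [pow_succ, Equiv.Perm.mul_apply, h1, ih.2, ← Equiv.Perm.mul_apply,
        ← pow_succ]

/-- `g` fixes all words of length at most `L`. -/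
def FixL (g : Equiv.Perm (List Bool)) (L : ℕ) : Prop :=
  ∀ v : List Bool, v.length ≤ L → g v = v

lemma fixL_of_cons {g g0 g1 : Equiv.Perm (List Bool)} {k L : ℕ}
    (hn : g [] = [])
    (h0 : ∀ w, g (false :: w) = false :: g0 w)
    (h1 : ∀ w, g (true :: w) = true :: g1 w)
    (f0 : FixL (g0 ^ k) L) (f1 : FixL (g1 ^ k) L) : FixL (g ^ k) (L + 1) := by
  intro v hv
  match v with
  | [] => exact pow_nil hn k
  | false :: w =>
    rw [(pow_cons h0 h1 k).1, f0 w (by simpa using hv)]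
  | true :: w =>
    rw [(pow_cons h0 h1 k).2, f1 w (by simpa using hv)]

lemma fixL_mono {g : Equiv.Perm (List Bool)} {L L' : ℕ} (h : FixL g L') (hL : L ≤ L') :
    FixL g L := fun v hv => h v (hv.trans hL)

lemma fixL_e (k L : ℕ) : FixL (aut Q.e ^ k) L := by
  intro v _
  induction k with
  | zero => rfl
  | succ k ih => rw [pow_succ, Equiv.Perm.mul_apply, acte, ih]

/-- witness word of length `3n+2` moved by `b^(2^n)`. -/
def wb : ℕ → List Bool
  | 0 => [false, false]
  | n + 1 => false :: false :: true :: wb n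

lemma wb_len (n : ℕ) : (wb n).length = 3 * n + 2 := by
  induction n with
  | zero => rfl
  | succ n ih => simp [wb, ih]; ring

lemma pow221 (g : Equiv.Perm (List Bool)) (n : ℕ) :
    g ^ (2 ^ (n + 1)) = (g ^ 2) ^ (2 ^ n) := by
  rw [← pow_mul, pow_succ']

lemma a_nil : a [] = [] := rfl
lemma b_nil : b [] = [] := rfl
lemma c_nil : c [] = [] := rfl
lemma d_nil : d [] = [] := rfl
lemma a2_nil : (a ^ 2) [] = [] := by rw [sq, Equiv.Perm.mul_apply, a_nil, a_nil]

lemma step (n : ℕ) (bfix : FixL (b ^ 2 ^ n) (3 * n + 1))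
    (bmove : (b ^ 2 ^ n) (wb n) ≠ wb n) :
    FixL (c ^ 2 ^ (n + 1)) (3 * n + 4) ∧
      (c ^ 2 ^ (n + 1)) (wb (n + 1)) ≠ wb (n + 1) ∧
    FixL (b ^ 2 ^ (n + 1)) (3 * n + 4) ∧
      (b ^ 2 ^ (n + 1)) (wb (n + 1)) ≠ wb (n + 1) := by
  have dfix : FixL (d ^ 2 ^ n) (3 * n + 2) :=
    fixL_of_cons d_nil d0 d1 (fixL_e _ _) bfix
  have dmove : (d ^ 2 ^ n) (true :: wb n) ≠ true :: wb n := by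
    rw [(pow_cons d0 d1 (2 ^ n)).2]
    simpa using bmove
  have afix : FixL (a ^ 2 ^ (n + 1)) (3 * n + 3) := by
    rw [pow221]
    exact fixL_of_cons a2_nil (fun w => a2c false w) (fun w => a2c true w) dfix dfix
  have amove : (a ^ 2 ^ (n + 1)) (false :: true :: wb n) ≠ false :: true :: wb n := by
    rw [pow221, (pow_cons (fun w => a2c false w) (fun w => a2c true w) (2 ^ n)).1]
    simpa using dmove
  have cfix : FixL (c ^ 2 ^ (n + 1)) (3 * n + 4) :=
    fixL_of_cons c_nil c0 c1 afix afix
  have hw : wb (n + 1) = false :: false :: true :: wb n := rfl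
  have cmove : (c ^ 2 ^ (n + 1)) (wb (n + 1)) ≠ wb (n + 1) := by
    rw [hw, (pow_cons c0 c1 (2 ^ (n + 1))).1]
    simpa using amove
  have bfix' : FixL (b ^ 2 ^ (n + 1)) (3 * n + 4) :=
    fixL_of_cons b_nil b0 b1 afix (fixL_mono cfix (by omega))
  have bmove' : (b ^ 2 ^ (n + 1)) (wb (n + 1)) ≠ wb (n + 1) := by
    rw [hw, (pow_cons b0 b1 (2 ^ (n + 1))).1]
    simpa using amove
  exact ⟨cfix, cmove, bfix', bmove'⟩

lemma main : ∀ n : ℕ, FixL (b ^ 2 ^ n) (3 * n + 1) ∧ (b ^ 2 ^ n) (wb n) ≠ wb n := by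
  intro n
  induction n with
  | zero =>
    constructor
    · intro v hv
      simp only [pow_zero, pow_one]
      match v, hv with
      | [], _ => rfl
      | [x], _ => cases x <;> rfl
    · simp only [pow_zero, pow_one, wb]
      intro h
      have hb : b [false, false] = [false, true] := rfl
      rw [hb] at h
      simp at h
  | succ n ih =>
    obtain ⟨cf, cm, bf, bm⟩ := step n ih.1 ih.2
    exact ⟨fixL_mono bf (by omega), bm⟩

/-- for `n ≥ 1`, `b^{2^n}` and `c^{2^n}` fix level `3n+1` but move some word
of length `3n+2`. -/
theorem b_c_pow_level_stabilizer (n : ℕ) (hn : 1 ≤ n) :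
    (∀ v : List Bool, v.length = 3 * n + 1 → (b ^ (2 ^ n)) v = v) ∧
    (∃ v : List Bool, v.length = 3 * n + 2 ∧ (b ^ (2 ^ n)) v ≠ v) ∧
    (∀ v : List Bool, v.length = 3 * n + 1 → (c ^ (2 ^ n)) v = v) ∧
    (∃ v : List Bool, v.length = 3 * n + 2 ∧ (c ^ (2 ^ n)) v ≠ v) := by
  obtain ⟨m, rfl⟩ : ∃ m, n = m + 1 := ⟨n - 1, by omega⟩
  obtain ⟨bf, bm⟩ := main (m + 1)
  obtain ⟨cf, cm, _, _⟩ := step m (main m).1 (main m).2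
  refine ⟨fun v hv => bf v (by omega), ⟨wb (m + 1), ?_, bm⟩,
    fun v hv => cf v (by omega), ⟨wb (m + 1), ?_, cm⟩⟩ <;> rw [wb_len]

end BVTree
end
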